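/- Let X = (X_1,...,X_n) be a random vector whose coordinates satisfy P(|X_i| ≥ s, |X_j| ≥ t) ≤ α·P(|X_i| ≥ s)·P(|X_j| ≥ t) for all i ≠ j and s,t > 0, with some α ≥ 1. Then there exists a constant c(α) > 0 depending only on α (one may take c(α) = (36(5+4α)(1+2α))^{-1}) such that for all 1 ≤ k ≤ n: c(α)·k·t(k,X) ≤ E[max_{|I|=k} Σ_{i∈I}|X_i|] ≤ 2·k·t(k,X). -/

import Mathlib

open MeasureTheory Finset Pointwise

noncomputable def maxKSum {n : ℕ} (k : ℕ) (x : Fin n → ℝ) : ℝ :=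
  sSup {y | ∃ I : Finset (Fin n), I.card = k ∧ y = ∑ i ∈ I, |x i|}

noncomputable def kthMax {n : ℕ} (k : ℕ) (x : Fin n → ℝ) : ℝ :=
  sSup {t : ℝ | k ≤ (Finset.univ.filter (fun i => t ≤ |x i|)).card}

noncomputable def tk {Ω : Type*} [MeasurableSpace Ω] (μ : Measure Ω) {n : ℕ}
    (X : Fin n → Ω → ℝ) (k : ℝ) : ℝ :=
  sInf {t : ℝ | 0 < t ∧ ∑ i, ∫ ω in {ω | t ≤ |X i ω|}, |X i ω| ∂μ ≤ k * t}

noncomputable def tstar {Ω : Type*} [MeasurableSpace Ω] (μ : Measure Ω) {n : ℕ}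
    (X : Fin n → Ω → ℝ) (p : ℝ) : ℝ :=
  sInf {t : ℝ | 0 < t ∧ ∑ i, (μ {ω | t ≤ |X i ω|}).toReal ≤ p}

def IsLogConcave {E : Type*} [AddCommGroup E] [Module ℝ E] [TopologicalSpace E]
    [MeasurableSpace E] (ν : Measure E) : Prop :=
  ∀ (K L : Set E) (l : ℝ), IsCompact K → IsCompact L → K.Nonempty → L.Nonempty →
    l ∈ Set.Icc (0 : ℝ) 1 → ν K ^ l * ν L ^ (1 - l) ≤ ν (l • K + (1 - l) • L)

noncomputable def med {Ω : Type*} [MeasurableSpace Ω] (μ : Measure Ω) (f : Ω → ℝ) : ℝ :=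
  sInf {t : ℝ | (1 : ℝ) / 2 ≤ (μ {ω | f ω ≤ t}).toReal}

noncomputable def kthMaxOn {n : ℕ} (J : Finset (Fin n)) (k : ℕ) (x : Fin n → ℝ) : ℝ :=
  sSup {t : ℝ | k ≤ (J.filter (fun i => t ≤ |x i|)).card}

set_option linter.unusedSectionVars false
set_option maxHeartbeats 1000000
namespace Aux13

lemma maxKSum_set_eq {n k : ℕ} (x : Fin n → ℝ) :
    {y | ∃ I : Finset (Fin n), I.card = k ∧ y = ∑ i ∈ I, |x i|} =
      (fun I : Finset (Fin n) => ∑ i ∈ I, |x i|) '' ↑(powersetCard k (univ : Finset (Fin n))) := by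
  ext y
  simp only [Set.mem_setOf_eq, Set.mem_image, Finset.coe_sort_coe, Finset.mem_coe,
    Finset.mem_powersetCard_univ]
  constructor
  · rintro ⟨I, hI, rfl⟩; exact ⟨I, hI, rfl⟩
  · rintro ⟨I, hI, rfl⟩; exact ⟨I, hI, rfl⟩

lemma pcne {n k : ℕ} (hk : k ≤ n) : (powersetCard k (univ : Finset (Fin n))).Nonempty := by
  rw [Finset.powersetCard_nonempty]; simpa using hk

lemma maxKSum_eq_sup' {n k : ℕ} (hk : k ≤ n) (x : Fin n → ℝ) :
    maxKSum k x = (powersetCard k (univ : Finset (Fin n))).sup' (pcne hk)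
      (fun I => ∑ i ∈ I, |x i|) := by
  rw [maxKSum, maxKSum_set_eq, Finset.sup'_eq_csSup_image]

lemma le_maxKSum {n k : ℕ} (hk : k ≤ n) (x : Fin n → ℝ) {I : Finset (Fin n)}
    (hI : I.card = k) : ∑ i ∈ I, |x i| ≤ maxKSum k x := by
  rw [maxKSum_eq_sup' hk]
  exact Finset.le_sup' (fun I => ∑ i ∈ I, |x i|) (Finset.mem_powersetCard_univ.2 hI)

lemma maxKSum_le {n k : ℕ} (hk : k ≤ n) (x : Fin n → ℝ) {B : ℝ}
    (hB : ∀ I : Finset (Fin n), I.card = k → ∑ i ∈ I, |x i| ≤ B) :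
    maxKSum k x ≤ B := by
  rw [maxKSum_eq_sup' hk]
  exact Finset.sup'_le _ _ fun I hI => hB I (Finset.mem_powersetCard_univ.1 hI)

lemma maxKSum_nonneg {n k : ℕ} (hk : k ≤ n) (x : Fin n → ℝ) : 0 ≤ maxKSum k x := by
  obtain ⟨I, -, hI⟩ := Finset.exists_subset_card_eq (by simpa using hk :
    k ≤ (univ : Finset (Fin n)).card)
  exact le_trans (Finset.sum_nonneg fun i _ => abs_nonneg _) (le_maxKSum hk x hI)

lemma maxKSum_le_total {n k : ℕ} (hk : k ≤ n) (x : Fin n → ℝ) :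
    maxKSum k x ≤ ∑ i, |x i| := by
  refine maxKSum_le hk x fun I _ => ?_
  exact Finset.sum_le_sum_of_subset_of_nonneg (Finset.subset_univ I) fun i _ _ => abs_nonneg _

/-- top-k selection -/
lemma exists_topk {n : ℕ} (f : Fin n → ℝ) :
    ∀ k ≤ n, ∃ I : Finset (Fin n), I.card = k ∧ ∀ i ∉ I, ∀ j ∈ I, f i ≤ f j := by
  intro k
  induction k with
  | zero => intro _; exact ⟨∅, by simp, by simp⟩
  | succ m ih =>
    intro hm
    obtain ⟨I, hIcard, hI⟩ := ih (Nat.le_of_succ_le hm)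
    have hne : Iᶜ.Nonempty := by
      rw [← Finset.card_pos, Finset.card_compl, hIcard, Fintype.card_fin]
      omega
    obtain ⟨a, ha, hamax⟩ := Finset.exists_max_image Iᶜ f hne
    have haI : a ∉ I := Finset.mem_compl.1 ha
    refine ⟨insert a I, by rw [Finset.card_insert_of_notMem haI, hIcard], ?_⟩
    intro i hi j hj
    have hiI : i ∉ I := fun h => hi (Finset.mem_insert_of_mem h)
    rcases Finset.mem_insert.1 hj with rfl | hjI
    · exact hamax i (Finset.mem_compl.2 hiI)
    · exact hI i hiI j hjI

/-- key nat inequality -/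
lemma natmin_ineq {m M k : ℕ} (hmM : m ≤ M) (hk : 1 ≤ k) :
    (m : ℝ) - m * (m - 1) / k ≤ min (M : ℝ) (k : ℝ) := by
  have hkpos : (0:ℝ) < k := by exact_mod_cast hk
  rcases le_or_gt m k with h | h
  · have h1 : (m:ℝ) ≤ min (M:ℝ) (k:ℝ) := by
      refine le_min (by exact_mod_cast hmM) (by exact_mod_cast h)
    have h2 : (0:ℝ) ≤ (m:ℝ) * ((m:ℝ) - 1) / k := by
      apply div_nonneg _ hkpos.le
      rcases Nat.eq_zero_or_pos m with rfl | hm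
      · simp
      · have : (1:ℝ) ≤ m := by exact_mod_cast hm
        nlinarith
    linarith
  · have hMk : min (M:ℝ) (k:ℝ) = (k:ℝ) := by
      rw [min_eq_right]; exact_mod_cast (le_of_lt (lt_of_lt_of_le h hmM))
    rw [hMk]
    have hm : (k:ℝ) + 1 ≤ m := by exact_mod_cast h
    have h2 : ((m:ℝ) - k) ≤ (m:ℝ) * ((m:ℝ) - 1) / k := by
      rw [le_div_iff₀ hkpos]; nlinarith
    linarith

/-- greedy subset selection -/
lemma greedy {n : ℕ} (q : Fin n → ℝ) (hq : ∀ i, 0 ≤ q i) {β : ℝ} (hβ : 0 < β)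
    (hsum : β ≤ ∑ i, q i) (hsmall : ∀ i, q i < β / 2) :
    ∃ J : Finset (Fin n), β / 2 ≤ ∑ i ∈ J, q i ∧ ∑ i ∈ J, q i ≤ β := by
  classical
  set S := (univ : Finset (Fin n)).powerset.filter (fun J => ∑ i ∈ J, q i ≤ β) with hS
  have hSne : S.Nonempty := ⟨∅, by simp [hS, hβ.le]⟩
  obtain ⟨J, hJS, hJmax⟩ := Finset.exists_max_image S (fun J => ∑ i ∈ J, q i) hSne
  have hJle : ∑ i ∈ J, q i ≤ β := (Finset.mem_filter.1 hJS).2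
  refine ⟨J, ?_, hJle⟩
  by_contra hlt
  push_neg at hlt
  by_cases hex : ∃ i ∉ J, 0 < q i
  · obtain ⟨i, hiJ, hqi⟩ := hex
    have hins : insert i J ∈ S := by
      rw [hS, Finset.mem_filter]
      refine ⟨Finset.mem_powerset.2 (Finset.subset_univ _), ?_⟩
      rw [Finset.sum_insert hiJ]
      have := hsmall i
      linarith
    have := hJmax _ hins
    rw [Finset.sum_insert hiJ] at this
    linarith
  · push_neg at hex
    have hzero : ∀ i ∈ Jᶜ, q i = 0 := fun i hi =>
      le_antisymm (hex i (Finset.mem_compl.1 hi)) (hq i)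
    have : ∑ i, q i = ∑ i ∈ J, q i := by
      rw [← Finset.sum_add_sum_compl J q, Finset.sum_eq_zero hzero, add_zero]
    linarith


lemma if_indicator (c : ℝ) : (fun s : ℝ => if s ≤ c then (1:ℝ) else 0) =
    (Set.Iic c).indicator (fun _ => (1:ℝ)) := by
  funext s; simp [Set.indicator_apply, Set.mem_Iic]

lemma integral_if_Ioi (t c : ℝ) :
    ∫ s in Set.Ioi t, (if s ≤ c then (1:ℝ) else 0) = (volume (Set.Ioc t c)).toReal := by
  rw [if_indicator, setIntegral_indicator measurableSet_Iic]
  have : Set.Ioi t ∩ Set.Iic c = Set.Ioc t c := Set.Ioi_inter_Iic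
  rw [this, setIntegral_const, smul_eq_mul, mul_one, measureReal_def]

lemma integrable_if_Ioi (t c : ℝ) :
    Integrable (fun s => if s ≤ c then (1:ℝ) else 0) (volume.restrict (Set.Ioi t)) := by
  rw [if_indicator]
  rw [integrable_indicator_iff measurableSet_Iic]
  refine integrableOn_const (lt_top_iff_ne_top.1 ?_)
  rw [Measure.restrict_apply measurableSet_Iic, Set.Iic_inter_Ioi]
  exact measure_Ioc_lt_top

lemma card_filter_cast {n : ℕ} (I : Finset (Fin n)) (p : Fin n → Prop) [DecidablePred p] :
    ((I.filter p).card : ℝ) = ∑ i ∈ I, if p i then (1:ℝ) else 0 := by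
  rw [Finset.card_filter]
  push_cast
  exact Finset.sum_congr rfl fun i _ => by split <;> simp


theorem key_pointwise {n k : ℕ} (hk1 : 1 ≤ k) (hk : k ≤ n) (x : Fin n → ℝ) :
    ∫ s in Set.Ioi (0:ℝ),
        min (((Finset.univ.filter fun i => s ≤ |x i|).card : ℝ)) (k : ℝ) ≤ maxKSum k x := by
  classical
  obtain ⟨I₀, hI₀card, hI₀⟩ := exists_topk (fun i => |x i|) k hk
  have hcard : ∀ s : ℝ, min (((Finset.univ.filter fun i => s ≤ |x i|).card : ℝ)) (k : ℝ)
      ≤ ((I₀.filter fun i => s ≤ |x i|).card : ℝ) := by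
    intro s
    by_cases hex : ∃ i ∉ I₀, s ≤ |x i|
    · obtain ⟨i, hiI, hsi⟩ := hex
      have : I₀.filter (fun i => s ≤ |x i|) = I₀ := by
        apply Finset.filter_true_of_mem
        intro j hj
        exact le_trans hsi (hI₀ i hiI j hj)
      rw [this, hI₀card]
      exact min_le_right _ _
    · push_neg at hex
      have : Finset.univ.filter (fun i => s ≤ |x i|) = I₀.filter (fun i => s ≤ |x i|) := by
        ext j
        simp only [Finset.mem_filter, Finset.mem_univ, true_and]
        constructor
        · intro hj
          refine ⟨?_, hj⟩
          by_contra hjI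
          exact absurd hj (not_le.2 (hex j hjI))
        · exact fun h => h.2
      rw [this]
      exact min_le_left _ _
  have hint : ∀ i : Fin n, Integrable (fun s => if s ≤ |x i| then (1:ℝ) else 0)
      (volume.restrict (Set.Ioi (0:ℝ))) := fun i => integrable_if_Ioi 0 |x i|
  have hintsum : Integrable (fun s => ∑ i ∈ I₀, if s ≤ |x i| then (1:ℝ) else 0)
      (volume.restrict (Set.Ioi (0:ℝ))) := integrable_finset_sum I₀ (fun i _ => hint i)
  have step1 : ∫ s in Set.Ioi (0:ℝ),
      min (((Finset.univ.filter fun i => s ≤ |x i|).card : ℝ)) (k : ℝ)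
      ≤ ∫ s in Set.Ioi (0:ℝ), ∑ i ∈ I₀, if s ≤ |x i| then (1:ℝ) else 0 := by
    refine integral_mono_of_nonneg (Filter.Eventually.of_forall fun s => ?_) hintsum
      (Filter.Eventually.of_forall fun s => ?_)
    · exact le_min (by positivity) (by positivity)
    · exact le_trans (hcard s) (le_of_eq (card_filter_cast I₀ _))
  have step2 : (∫ s in Set.Ioi (0:ℝ), ∑ i ∈ I₀, if s ≤ |x i| then (1:ℝ) else 0)
      = ∑ i ∈ I₀, |x i| := by
    rw [integral_finset_sum I₀ (fun i _ => hint i)]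
    refine Finset.sum_congr rfl fun i _ => ?_
    rw [integral_if_Ioi 0 |x i|, Real.volume_Ioc,
      ENNReal.toReal_ofReal (by simpa using abs_nonneg (x i))]
    ring
  calc _ ≤ _ := step1
    _ = ∑ i ∈ I₀, |x i| := step2
    _ ≤ maxKSum k x := le_maxKSum hk x hI₀card


set_option linter.unusedSectionVars false
section Meas
variable {Ω : Type*} [MeasurableSpace Ω] {μ : Measure Ω} [IsProbabilityMeasure μ]

lemma measurableSet_S {f : Ω → ℝ} (hf : Measurable f) (t : ℝ) :
    MeasurableSet {ω | t ≤ |f ω|} := measurableSet_le measurable_const hf.abs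

lemma if_eq_indicator_S {f : Ω → ℝ} (s : ℝ) :
    (fun ω => if s ≤ |f ω| then (1:ℝ) else 0) = Set.indicator {ω | s ≤ |f ω|} (fun _ => 1) := by
  funext ω; simp [Set.indicator_apply]

lemma integral_if_S {f : Ω → ℝ} (hf : Measurable f) (s : ℝ) :
    (∫ ω, (if s ≤ |f ω| then (1:ℝ) else 0) ∂μ) = (μ {ω | s ≤ |f ω|}).toReal := by
  rw [if_eq_indicator_S, integral_indicator (measurableSet_S hf s), setIntegral_const,
    smul_eq_mul, mul_one, measureReal_def]

lemma integrable_if_S {f : Ω → ℝ} (hf : Measurable f) (s : ℝ) :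
    Integrable (fun ω => if s ≤ |f ω| then (1:ℝ) else 0) μ := by
  rw [if_eq_indicator_S]
  exact (integrable_indicator_iff (measurableSet_S hf s)).2
    (integrableOn_const (measure_lt_top μ _).ne)

lemma prod_indicator_integrable {f : Ω → ℝ} (hf : Measurable f) (hfi : Integrable f μ)
    {t : ℝ} (ht : 0 ≤ t) :
    Integrable (fun q : ℝ × Ω => if q.1 ≤ |f q.2| then (1:ℝ) else 0)
      ((volume.restrict (Set.Ioi t)).prod μ) := by
  have hA : MeasurableSet {q : ℝ × Ω | q.1 ≤ |f q.2|} :=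
    measurableSet_le measurable_fst (hf.abs.comp measurable_snd)
  have heq : (fun q : ℝ × Ω => if q.1 ≤ |f q.2| then (1:ℝ) else 0)
      = Set.indicator {q : ℝ × Ω | q.1 ≤ |f q.2|} (fun _ => 1) := by
    funext q; simp [Set.indicator_apply]
  rw [heq]
  refine (integrable_indicator_iff hA).2 (integrableOn_const (lt_top_iff_ne_top.1 ?_))
  rw [Measure.prod_apply_symm hA]
  have hpt : ∀ ω, (volume.restrict (Set.Ioi t)) ((fun s => (s, ω)) ⁻¹' {q : ℝ × Ω | q.1 ≤ |f q.2|})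
      ≤ (‖f ω‖₊ : ENNReal) := by
    intro ω
    have : ((fun s => (s, ω)) ⁻¹' {q : ℝ × Ω | q.1 ≤ |f q.2|}) = Set.Iic |f ω| := rfl
    rw [this, Measure.restrict_apply measurableSet_Iic, Set.Iic_inter_Ioi, Real.volume_Ioc]
    rw [← enorm_eq_nnnorm, ← ofReal_norm, Real.norm_eq_abs]
    exact ENNReal.ofReal_le_ofReal (by linarith)
  exact lt_of_le_of_lt (lintegral_mono hpt) hfi.2

lemma swap_eq {f : Ω → ℝ} (hf : Measurable f) (hfi : Integrable f μ) {t : ℝ} (ht : 0 ≤ t) :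
    (∫ s in Set.Ioi t, (μ {ω | s ≤ |f ω|}).toReal) =
      ∫ ω, (volume (Set.Ioc t |f ω|)).toReal ∂μ := by
  have hswap := integral_integral_swap (f := fun (s : ℝ) (ω : Ω) => if s ≤ |f ω| then (1:ℝ) else 0)
    (μ := volume.restrict (Set.Ioi t)) (ν := μ) (prod_indicator_integrable hf hfi ht)
  calc (∫ s in Set.Ioi t, (μ {ω | s ≤ |f ω|}).toReal)
      = ∫ s in Set.Ioi t, ∫ ω, (if s ≤ |f ω| then (1:ℝ) else 0) ∂μ := by
        refine (setIntegral_congr_fun measurableSet_Ioi fun s _ => ?_).symm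
        exact integral_if_S hf s
    _ = ∫ ω, (∫ s in Set.Ioi t, (if s ≤ |f ω| then (1:ℝ) else 0)) ∂μ := hswap
    _ = ∫ ω, (volume (Set.Ioc t |f ω|)).toReal ∂μ := by
        refine integral_congr_ae (Filter.Eventually.of_forall fun ω => ?_)
        exact integral_if_Ioi t |f ω|

lemma integrable_p {f : Ω → ℝ} (hf : Measurable f) (hfi : Integrable f μ) {t : ℝ} (ht : 0 ≤ t) :
    IntegrableOn (fun s => (μ {ω | s ≤ |f ω|}).toReal) (Set.Ioi t) := by
  have h := (prod_indicator_integrable hf hfi ht).integral_prod_left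
  refine h.congr (Filter.Eventually.of_forall fun s => ?_)
  exact integral_if_S hf s

lemma vol_Ioc_toReal (t c : ℝ) : (volume (Set.Ioc t c)).toReal = max (c - t) 0 := by
  rw [Real.volume_Ioc]; rfl

lemma integrable_vol_Ioc {f : Ω → ℝ} (hf : Measurable f) (hfi : Integrable f μ) (t : ℝ) :
    Integrable (fun ω => (volume (Set.Ioc t |f ω|)).toReal) μ := by
  have heq : (fun ω => (volume (Set.Ioc t |f ω|)).toReal) = fun ω => max (|f ω| - t) 0 := by
    funext ω; exact vol_Ioc_toReal t |f ω|
  rw [heq]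
  refine Integrable.mono' (hfi.abs.add (integrable_const |t|))
    ((hf.abs.sub measurable_const).max measurable_const).aestronglyMeasurable
    (Filter.Eventually.of_forall fun ω => ?_)
  rw [Real.norm_eq_abs, Pi.add_apply]
  rcases le_total (|f ω| - t) 0 with h | h
  · rw [max_eq_right h]; simp [abs_nonneg]; positivity
  · rw [max_eq_left h, abs_of_nonneg h]
    have := abs_nonneg (f ω); have := le_abs_self t; have := neg_abs_le t; linarith

lemma tail_repr {f : Ω → ℝ} (hf : Measurable f) (hfi : Integrable f μ) {t : ℝ} (ht : 0 ≤ t) :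
    ∫ ω in {ω | t ≤ |f ω|}, |f ω| ∂μ =
      t * (μ {ω | t ≤ |f ω|}).toReal + ∫ s in Set.Ioi t, (μ {ω | s ≤ |f ω|}).toReal := by
  have hS := measurableSet_S hf t
  have hpt : (fun ω => Set.indicator {ω | t ≤ |f ω|} (fun ω => |f ω|) ω)
      = fun ω => t * (if t ≤ |f ω| then (1:ℝ) else 0) + (volume (Set.Ioc t |f ω|)).toReal := by
    funext ω
    simp only [Set.indicator_apply, Set.mem_setOf_eq]
    by_cases h : t ≤ |f ω|
    · rw [if_pos h, if_pos h, vol_Ioc_toReal, max_eq_left (by linarith)]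
      ring
    · rw [if_neg h, if_neg h, vol_Ioc_toReal,
        max_eq_right (by push_neg at h; linarith)]
      ring
  rw [← integral_indicator hS]
  calc (∫ ω, Set.indicator {ω | t ≤ |f ω|} (fun ω => |f ω|) ω ∂μ)
      = ∫ ω, (t * (if t ≤ |f ω| then (1:ℝ) else 0) + (volume (Set.Ioc t |f ω|)).toReal) ∂μ := by
        rw [hpt]
    _ = t * (μ {ω | t ≤ |f ω|}).toReal + ∫ s in Set.Ioi t, (μ {ω | s ≤ |f ω|}).toReal := by
        rw [integral_add ((integrable_if_S hf t).const_mul t) (integrable_vol_Ioc hf hfi t),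
          integral_const_mul, integral_if_S hf t, swap_eq hf hfi ht]

lemma and_setOf_eq {f g : Ω → ℝ} (s t : ℝ) :
    {ω | s ≤ |f ω| ∧ t ≤ |g ω|} = {ω | s ≤ |f ω|} ∩ {ω | t ≤ |g ω|} := rfl

lemma mul_if_eq_indicator {f g : Ω → ℝ} (s t : ℝ) :
    (fun ω => (if s ≤ |f ω| then (1:ℝ) else 0) * (if t ≤ |g ω| then (1:ℝ) else 0))
      = Set.indicator {ω | s ≤ |f ω| ∧ t ≤ |g ω|} (fun _ => 1) := by
  funext ω
  by_cases h1 : s ≤ |f ω| <;> by_cases h2 : t ≤ |g ω| <;>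
    simp [Set.indicator_apply, h1, h2]

lemma integral_mul_if {f g : Ω → ℝ} (hf : Measurable f) (hg : Measurable g) (s t : ℝ) :
    (∫ ω, (if s ≤ |f ω| then (1:ℝ) else 0) * (if t ≤ |g ω| then (1:ℝ) else 0) ∂μ)
      = (μ {ω | s ≤ |f ω| ∧ t ≤ |g ω|}).toReal := by
  have hAB : MeasurableSet {ω | s ≤ |f ω| ∧ t ≤ |g ω|} := by
    rw [and_setOf_eq]
    exact (measurableSet_S hf s).inter (measurableSet_S hg t)
  rw [mul_if_eq_indicator, integral_indicator hAB, setIntegral_const, smul_eq_mul, mul_one, measureReal_def]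

lemma integrable_mul_if {f g : Ω → ℝ} (hf : Measurable f) (hg : Measurable g) (s t : ℝ) :
    Integrable (fun ω => (if s ≤ |f ω| then (1:ℝ) else 0) * (if t ≤ |g ω| then (1:ℝ) else 0)) μ := by
  have hAB : MeasurableSet {ω | s ≤ |f ω| ∧ t ≤ |g ω|} := by
    rw [and_setOf_eq]
    exact (measurableSet_S hf s).inter (measurableSet_S hg t)
  rw [mul_if_eq_indicator]
  exact (integrable_indicator_iff hAB).2 (integrableOn_const (measure_lt_top μ _).ne)

variable {n : ℕ} {X : Fin n → Ω → ℝ}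

lemma measurable_Ncast (hm : ∀ i, Measurable (X i)) (s : ℝ) (k : ℕ) :
    Measurable (fun ω => min (((univ.filter fun i => s ≤ |X i ω|).card : ℝ)) (k:ℝ)) := by
  have : (fun ω => (((univ.filter fun i => s ≤ |X i ω|).card : ℝ)))
      = fun ω => ∑ i, if s ≤ |X i ω| then (1:ℝ) else 0 := by
    funext ω; exact card_filter_cast univ _
  refine Measurable.min ?_ measurable_const
  rw [this]
  exact Finset.measurable_sum univ fun i _ =>
    Measurable.ite (measurableSet_S (hm i) s) measurable_const measurable_const

lemma integrable_Ncast (hm : ∀ i, Measurable (X i)) (s : ℝ) (k : ℕ) :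
    Integrable (fun ω => min (((univ.filter fun i => s ≤ |X i ω|).card : ℝ)) (k:ℝ)) μ := by
  refine Integrable.mono' (integrable_const (k:ℝ)) (measurable_Ncast hm s k).aestronglyMeasurable
    (Filter.Eventually.of_forall fun ω => ?_)
  rw [Real.norm_eq_abs, abs_of_nonneg (le_min (by positivity) (by positivity))]
  exact min_le_right _ _

theorem claimC (hm : ∀ i, Measurable (X i)) {α : ℝ} (hα : 1 ≤ α)
    (hcond : ∀ i j, i ≠ j → ∀ s t : ℝ, 0 < s → 0 < t →
      (μ {ω | s ≤ |X i ω| ∧ t ≤ |X j ω|}).toReal ≤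
        α * (μ {ω | s ≤ |X i ω|}).toReal * (μ {ω | t ≤ |X j ω|}).toReal)
    {k : ℕ} (hk1 : 1 ≤ k) {s : ℝ} (hs : 0 < s) :
    min (∑ i, (μ {ω | s ≤ |X i ω|}).toReal) (k:ℝ) / (8 * α)
      ≤ ∫ ω, min (((univ.filter fun i => s ≤ |X i ω|).card : ℝ)) (k:ℝ) ∂μ := by
  classical
  have hα0 : (0:ℝ) < α := lt_of_lt_of_le one_pos hα
  have hk0 : (0:ℝ) < k := by exact_mod_cast hk1
  set q : Fin n → ℝ := fun i => (μ {ω | s ≤ |X i ω|}).toReal with hq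
  have hq0 : ∀ i, 0 ≤ q i := fun i => ENNReal.toReal_nonneg
  set P : ℝ := ∑ i, q i with hP
  have hP0 : 0 ≤ P := Finset.sum_nonneg fun i _ => hq0 i
  set E : ℝ := ∫ ω, min (((univ.filter fun i => s ≤ |X i ω|).card : ℝ)) (k:ℝ) ∂μ with hE
  have hE0 : 0 ≤ E := integral_nonneg fun ω => le_min (by positivity) (by positivity)
  set r : Fin n → Ω → ℝ := fun i ω => if s ≤ |X i ω| then (1:ℝ) else 0 with hr
  have hr_int : ∀ i, Integrable (r i) μ := fun i => integrable_if_S (hm i) s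
  have hrr_int : ∀ i j, Integrable (fun ω => r i ω * r j ω) μ := fun i j =>
    integrable_mul_if (hm i) (hm j) s s
  -- single index bound
  have h1 : ∀ i, q i ≤ E := by
    intro i
    have hqi : q i = ∫ ω, r i ω ∂μ := (integral_if_S (hm i) s).symm
    rw [hqi, hE]
    refine integral_mono (hr_int i) (integrable_Ncast hm s k) fun ω => ?_
    by_cases h : s ≤ |X i ω|
    · have : r i ω = 1 := if_pos h
      rw [this]
      refine le_min ?_ (by simpa using hk1)
      have h1le : 1 ≤ (univ.filter fun j => s ≤ |X j ω|).card :=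
        Finset.card_pos.2 ⟨i, Finset.mem_filter.2 ⟨Finset.mem_univ i, h⟩⟩
      simpa using h1le
    · have : r i ω = 0 := if_neg h
      rw [this]
      exact le_min (by positivity) (by positivity)
  -- subset second moment bound
  have keyJ : ∀ J : Finset (Fin n),
      (∑ i ∈ J, q i) - α * (∑ i ∈ J, q i)^2 / k ≤ E := by
    intro J
    set QJ : ℝ := ∑ i ∈ J, q i with hQJ
    have hQJ0 : 0 ≤ QJ := Finset.sum_nonneg fun i _ => hq0 i
    have hintG : Integrable (fun ω => ∑ i ∈ J, ∑ j ∈ J, r i ω * r j ω) μ :=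
      integrable_finset_sum _ fun i _ => integrable_finset_sum _ fun j _ => hrr_int i j
    have hintSJ : Integrable (fun ω => ∑ i ∈ J, r i ω) μ :=
      integrable_finset_sum _ fun i _ => hr_int i
    have hESJ : (∫ ω, ∑ i ∈ J, r i ω ∂μ) = QJ := by
      rw [integral_finset_sum _ fun i _ => hr_int i]
      exact Finset.sum_congr rfl fun i _ => integral_if_S (hm i) s
    have hEG : (∫ ω, ∑ i ∈ J, ∑ j ∈ J, r i ω * r j ω ∂μ) ≤ QJ + α * QJ^2 := by
      rw [integral_finset_sum _ fun i _ => integrable_finset_sum _ fun j _ => hrr_int i j]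
      have inner_eq : ∀ i ∈ J, (∫ ω, ∑ j ∈ J, r i ω * r j ω ∂μ)
          = ∑ j ∈ J, ∫ ω, r i ω * r j ω ∂μ := fun i _ =>
        integral_finset_sum _ fun j _ => hrr_int i j
      rw [Finset.sum_congr rfl inner_eq]
      have bound : ∀ i ∈ J, (∑ j ∈ J, ∫ ω, r i ω * r j ω ∂μ) ≤ q i + α * q i * QJ := by
        intro i hi
        rw [← Finset.add_sum_erase J _ hi]
        have h_ii : (∫ ω, r i ω * r i ω ∂μ) = q i := by
          have hrri : (fun ω => r i ω * r i ω) = r i := by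
            funext ω; rw [hr]; by_cases h : s ≤ |X i ω| <;> simp [h]
          rw [hrri]
          exact integral_if_S (hm i) s
        have h_ij : ∀ j ∈ J.erase i, (∫ ω, r i ω * r j ω ∂μ) ≤ α * (q i * q j) := by
          intro j hj
          have heq : (∫ ω, r i ω * r j ω ∂μ)
              = (μ {ω | s ≤ |X i ω| ∧ s ≤ |X j ω|}).toReal :=
            integral_mul_if (hm i) (hm j) s s
          rw [heq]
          have hne : i ≠ j := (Finset.ne_of_mem_erase hj).symm
          calc (μ {ω | s ≤ |X i ω| ∧ s ≤ |X j ω|}).toReal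
              ≤ α * (μ {ω | s ≤ |X i ω|}).toReal * (μ {ω | s ≤ |X j ω|}).toReal :=
                hcond i j hne s s hs hs
            _ = α * (q i * q j) := by ring
        calc (∫ ω, r i ω * r i ω ∂μ) + ∑ j ∈ J.erase i, ∫ ω, r i ω * r j ω ∂μ
            ≤ q i + ∑ j ∈ J.erase i, α * (q i * q j) :=
              add_le_add (le_of_eq h_ii) (Finset.sum_le_sum h_ij)
          _ ≤ q i + ∑ j ∈ J, α * (q i * q j) := by
              refine add_le_add le_rfl ?_
              refine Finset.sum_le_sum_of_subset_of_nonneg (Finset.erase_subset i J)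
                fun j _ _ => ?_
              have := hq0 i; have := hq0 j; positivity
          _ = q i + α * q i * QJ := by
              rw [hQJ, Finset.mul_sum]
              congr 1
              exact Finset.sum_congr rfl fun j _ => by ring
      calc (∑ i ∈ J, ∑ j ∈ J, ∫ ω, r i ω * r j ω ∂μ)
          ≤ ∑ i ∈ J, (q i + α * q i * QJ) := Finset.sum_le_sum bound
        _ = QJ + α * QJ^2 := by
            rw [Finset.sum_add_distrib, ← hQJ]
            congr 1
            have : (∑ i ∈ J, α * q i * QJ) = ∑ i ∈ J, (α * QJ) * q i :=
              Finset.sum_congr rfl fun i _ => by ring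
            rw [this, ← Finset.mul_sum, ← hQJ]
            ring
    -- pointwise bound and conclusion
    have hpt : ∀ ω, (∑ i ∈ J, r i ω) - ((∑ i ∈ J, ∑ j ∈ J, r i ω * r j ω) - ∑ i ∈ J, r i ω) / k
        ≤ min (((univ.filter fun i => s ≤ |X i ω|).card : ℝ)) (k:ℝ) := by
      intro ω
      have hsq_eq : (∑ i ∈ J, ∑ j ∈ J, r i ω * r j ω) = (∑ i ∈ J, r i ω)^2 := by
        rw [sq, Finset.sum_mul_sum]
      have hsum_eq : (∑ i ∈ J, r i ω) = ((J.filter fun i => s ≤ |X i ω|).card : ℝ) :=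
        (card_filter_cast J _).symm
      rw [hsq_eq, hsum_eq]
      have hmM : (J.filter fun i => s ≤ |X i ω|).card
          ≤ (univ.filter fun i => s ≤ |X i ω|).card :=
        Finset.card_le_card (Finset.filter_subset_filter _ (Finset.subset_univ J))
      have hnat := natmin_ineq hmM hk1
      set c := ((J.filter fun i => s ≤ |X i ω|).card : ℝ)
      have heq2 : (c^2 - c)/(k:ℝ) = c * (c - 1) / k := by ring
      rw [heq2]
      exact hnat
    have hGS : Integrable (fun ω => (∑ i ∈ J, ∑ j ∈ J, r i ω * r j ω) - ∑ i ∈ J, r i ω) μ := by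
      exact hintG.sub hintSJ
    have hdivGS : Integrable
        (fun ω => ((∑ i ∈ J, ∑ j ∈ J, r i ω * r j ω) - ∑ i ∈ J, r i ω) / k) μ :=
      hGS.div_const k
    have hlhs_int : Integrable (fun ω =>
        (∑ i ∈ J, r i ω) - ((∑ i ∈ J, ∑ j ∈ J, r i ω * r j ω) - ∑ i ∈ J, r i ω) / k) μ := by
      exact hintSJ.sub hdivGS
    have hEineq : (∫ ω, ((∑ i ∈ J, r i ω)
        - ((∑ i ∈ J, ∑ j ∈ J, r i ω * r j ω) - ∑ i ∈ J, r i ω) / k) ∂μ) ≤ E := by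
      rw [hE]
      exact integral_mono hlhs_int (integrable_Ncast hm s k) hpt
    rw [integral_sub hintSJ hdivGS, integral_div, integral_sub hintG hintSJ, hESJ] at hEineq
    have hnum : (∫ ω, ∑ i ∈ J, ∑ j ∈ J, r i ω * r j ω ∂μ) - QJ ≤ α * QJ^2 := by linarith
    have hdiv : ((∫ ω, ∑ i ∈ J, ∑ j ∈ J, r i ω * r j ω ∂μ) - QJ) / k ≤ α * QJ^2 / k :=
      (div_le_div_iff_of_pos_right hk0).2 hnum
    linarith
  -- final assembly
  set β : ℝ := min P ((k:ℝ) / (2*α)) with hβ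
  rcases le_or_gt β 0 with hβ0 | hβ0
  · have hk2α : (0:ℝ) < (k:ℝ) / (2*α) := by positivity
    have hPle : P ≤ 0 := by
      by_contra hPc
      push_neg at hPc
      have : 0 < β := lt_min hPc hk2α
      linarith
    have hPzero : P = 0 := le_antisymm hPle hP0
    have hmin0 : min P (k:ℝ) = 0 := by rw [hPzero]; exact min_eq_left hk0.le
    rw [hmin0, zero_div]
    exact hE0
  · have hβP : β ≤ P := min_le_left _ _
    have hβk2α : β ≤ (k:ℝ) / (2*α) := min_le_right _ _
    have h2αβ : 2 * α * β ≤ k := by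
      rw [le_div_iff₀ (by positivity : (0:ℝ) < 2*α)] at hβk2α
      linarith
    have hmain : β / 4 ≤ E := by
      by_cases hex : ∃ i, β/2 ≤ q i
      · obtain ⟨i, hi⟩ := hex
        linarith [h1 i]
      · push_neg at hex
        obtain ⟨J, hJlo, hJhi⟩ := greedy q hq0 hβ0 hβP hex
        have hkey := keyJ J
        set QJ : ℝ := ∑ i ∈ J, q i
        have hQJ0 : 0 ≤ QJ := Finset.sum_nonneg fun i _ => hq0 i
        have h2aQ : 2 * α * QJ ≤ (k:ℝ) := by nlinarith
        have hsq : α * QJ^2 / k ≤ QJ / 2 := by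
          rw [div_le_div_iff₀ (by positivity) (by norm_num : (0:ℝ) < 2)]
          nlinarith [mul_le_mul_of_nonneg_right h2aQ hQJ0]
        linarith
    have hminle : min P (k:ℝ) ≤ 2 * α * β := by
      rcases min_cases P ((k:ℝ)/(2*α)) with ⟨h, hle⟩ | ⟨h, hle⟩
      · rw [hβ, h]
        calc min P (k:ℝ) ≤ P := min_le_left _ _
          _ ≤ 2 * α * P := by nlinarith
      · rw [hβ, h]
        have : 2 * α * ((k:ℝ)/(2*α)) = k := by field_simp
        rw [this]
        exact min_le_right _ _
    calc min P (k:ℝ) / (8*α) ≤ (2*α*β) / (8*α) :=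
          div_le_div_of_nonneg_right hminle (by positivity)
        _ = β / 4 := by field_simp; ring
        _ ≤ E := hmain


lemma prod_minN_integrable (hm : ∀ i, Measurable (X i)) (hint : ∀ i, Integrable (X i) μ)
    (k : ℕ) :
    Integrable (Function.uncurry fun (s : ℝ) (ω : Ω) =>
        min (((univ.filter fun i => s ≤ |X i ω|).card : ℝ)) (k:ℝ))
      ((volume.restrict (Set.Ioi (0:ℝ))).prod μ) := by
  have hmeas : Measurable (Function.uncurry fun (s : ℝ) (ω : Ω) =>
      min (((univ.filter fun i => s ≤ |X i ω|).card : ℝ)) (k:ℝ)) := by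
    have hcast : (Function.uncurry fun (s : ℝ) (ω : Ω) =>
        min (((univ.filter fun i => s ≤ |X i ω|).card : ℝ)) (k:ℝ))
        = fun q : ℝ × Ω => min (∑ i, if q.1 ≤ |X i q.2| then (1:ℝ) else 0) (k:ℝ) := by
      funext q
      rw [Function.uncurry]
      rw [card_filter_cast univ _]
    rw [hcast]
    refine Measurable.min ?_ measurable_const
    refine Finset.measurable_sum univ fun i _ => ?_
    exact Measurable.ite
      (measurableSet_le measurable_fst ((hm i).abs.comp measurable_snd))
      measurable_const measurable_const
  have hg_int : Integrable (fun q : ℝ × Ω => ∑ i, if q.1 ≤ |X i q.2| then (1:ℝ) else 0)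
      ((volume.restrict (Set.Ioi (0:ℝ))).prod μ) :=
    integrable_finset_sum _ fun i _ =>
      prod_indicator_integrable (hm i) (hint i) le_rfl
  refine Integrable.mono' hg_int hmeas.aestronglyMeasurable
    (Filter.Eventually.of_forall fun q => ?_)
  rw [Real.norm_eq_abs, Function.uncurry]
  have h0 : (0:ℝ) ≤ min (((univ.filter fun i => q.1 ≤ |X i q.2|).card : ℝ)) (k:ℝ) :=
    le_min (by positivity) (by positivity)
  rw [abs_of_nonneg h0]
  calc min (((univ.filter fun i => q.1 ≤ |X i q.2|).card : ℝ)) (k:ℝ)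
      ≤ ((univ.filter fun i => q.1 ≤ |X i q.2|).card : ℝ) := min_le_left _ _
    _ = ∑ i, if q.1 ≤ |X i q.2| then (1:ℝ) else 0 := card_filter_cast univ _

lemma fub2 (hm : ∀ i, Measurable (X i)) (hint : ∀ i, Integrable (X i) μ) (k : ℕ) :
    (∫ ω, (∫ s in Set.Ioi (0:ℝ),
        min (((univ.filter fun i => s ≤ |X i ω|).card : ℝ)) (k:ℝ)) ∂μ)
      = ∫ s in Set.Ioi (0:ℝ),
          (∫ ω, min (((univ.filter fun i => s ≤ |X i ω|).card : ℝ)) (k:ℝ) ∂μ) := by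
  exact (integral_integral_swap (prod_minN_integrable hm hint k)).symm

lemma h_integrable (hm : ∀ i, Measurable (X i)) (hint : ∀ i, Integrable (X i) μ) (k : ℕ) :
    IntegrableOn (fun s => ∫ ω, min (((univ.filter fun i => s ≤ |X i ω|).card : ℝ)) (k:ℝ) ∂μ)
      (Set.Ioi (0:ℝ)) :=
  (prod_minN_integrable hm hint k).integral_prod_left

lemma p_antitone (hm : ∀ i, Measurable (X i)) :
    Antitone (fun s => ∑ i, (μ {ω | s ≤ |X i ω|}).toReal) := by
  intro s t hst
  refine Finset.sum_le_sum fun i _ => ?_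
  refine ENNReal.toReal_mono (measure_ne_top μ _) (measure_mono ?_)
  intro ω hω
  exact le_trans hst hω

lemma p_int_Ioi (hm : ∀ i, Measurable (X i)) (hint : ∀ i, Integrable (X i) μ)
    {t : ℝ} (ht : 0 ≤ t) :
    IntegrableOn (fun s => ∑ i, (μ {ω | s ≤ |X i ω|}).toReal) (Set.Ioi t) :=
  integrable_finset_sum _ fun i _ => integrable_p (hm i) (hint i) ht

lemma claimD (hm : ∀ i, Measurable (X i)) (hint : ∀ i, Integrable (X i) μ)
    {k : ℕ} (hk1 : 1 ≤ k) {t : ℝ} (ht : 0 < t)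
    (hgt : (k:ℝ) * t < ∑ i, ∫ ω in {ω | t ≤ |X i ω|}, |X i ω| ∂μ) :
    (k:ℝ) * t ≤ ∫ s in Set.Ioi (0:ℝ),
      min (∑ i, (μ {ω | s ≤ |X i ω|}).toReal) (k:ℝ) := by
  set p : ℝ → ℝ := fun s => ∑ i, (μ {ω | s ≤ |X i ω|}).toReal with hp
  have hp0 : ∀ s, 0 ≤ p s := fun s => Finset.sum_nonneg fun i _ => ENNReal.toReal_nonneg
  have hpanti : Antitone p := p_antitone hm
  have hpmeas : Measurable p := hpanti.measurable
  have hk0 : (0:ℝ) < k := by exact_mod_cast hk1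
  -- representation of the tail sum
  have hrepr : (∑ i, ∫ ω in {ω | t ≤ |X i ω|}, |X i ω| ∂μ)
      = t * p t + ∫ s in Set.Ioi t, p s := by
    have h1 : ∀ i : Fin n, (∫ ω in {ω | t ≤ |X i ω|}, |X i ω| ∂μ)
        = t * (μ {ω | t ≤ |X i ω|}).toReal + ∫ s in Set.Ioi t, (μ {ω | s ≤ |X i ω|}).toReal :=
      fun i => tail_repr (hm i) (hint i) ht.le
    rw [Finset.sum_congr rfl fun i _ => h1 i, Finset.sum_add_distrib, ← Finset.mul_sum,
      ← integral_finset_sum _ fun i _ => integrable_p (hm i) (hint i) ht.le]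
  have hky : (k:ℝ) * t < t * p t + ∫ s in Set.Ioi t, p s := hrepr ▸ hgt
  -- integrability of min (p s) k on pieces
  have hmeasmin : Measurable (fun s => min (p s) (k:ℝ)) := hpmeas.min measurable_const
  have hminon1 : IntegrableOn (fun s => min (p s) (k:ℝ)) (Set.Ioc 0 t) := by
    refine Integrable.mono' (g := fun _ => (k:ℝ))
      (integrableOn_const measure_Ioc_lt_top.ne)
      hmeasmin.aestronglyMeasurable
      (Filter.Eventually.of_forall fun s => ?_)
    rw [Real.norm_eq_abs, abs_of_nonneg (le_min (hp0 s) hk0.le)]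
    exact min_le_right _ _
  have hminon2 : IntegrableOn (fun s => min (p s) (k:ℝ)) (Set.Ioi t) := by
    refine Integrable.mono' (p_int_Ioi hm hint ht.le) hmeasmin.aestronglyMeasurable
      (Filter.Eventually.of_forall fun s => ?_)
    rw [Real.norm_eq_abs, abs_of_nonneg (le_min (hp0 s) hk0.le)]
    exact min_le_left _ _
  have hsplit : (∫ s in Set.Ioi (0:ℝ), min (p s) (k:ℝ))
      = (∫ s in Set.Ioc 0 t, min (p s) (k:ℝ)) + ∫ s in Set.Ioi t, min (p s) (k:ℝ) := by
    rw [← setIntegral_union (Set.Ioc_disjoint_Ioi le_rfl) measurableSet_Ioi hminon1 hminon2,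
      Set.Ioc_union_Ioi_eq_Ioi ht.le]
  have hIoc_vol : (volume (Set.Ioc (0:ℝ) t)).toReal = t := by
    rw [Real.volume_Ioc, ENNReal.toReal_ofReal (by linarith)]
    ring
  rcases lt_or_ge (p t) (k:ℝ) with hpk | hpk
  · -- p t < k
    have hIoc : (∫ s in Set.Ioc 0 t, (fun _ => p t) s) ≤ ∫ s in Set.Ioc 0 t, min (p s) (k:ℝ) := by
      refine setIntegral_mono_on (integrableOn_const measure_Ioc_lt_top.ne) hminon1
        measurableSet_Ioc fun s hs => ?_
      exact le_min (hpanti hs.2) hpk.le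
    have hIocval : (∫ s in Set.Ioc (0:ℝ) t, (fun _ => p t) s) = t * p t := by
      rw [setIntegral_const, smul_eq_mul, measureReal_def, hIoc_vol]
    have hIoi : (∫ s in Set.Ioi t, min (p s) (k:ℝ)) = ∫ s in Set.Ioi t, p s := by
      refine setIntegral_congr_fun measurableSet_Ioi fun s hs => ?_
      exact min_eq_left (le_of_lt (lt_of_le_of_lt (hpanti (le_of_lt hs)) hpk))
    rw [hsplit, hIoi]
    rw [hIocval] at hIoc
    linarith
  · -- k ≤ p t
    have hIoc : (∫ s in Set.Ioc 0 t, min (p s) (k:ℝ)) = ∫ s in Set.Ioc 0 t, (fun _ => (k:ℝ)) s := by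
      refine setIntegral_congr_fun measurableSet_Ioc fun s hs => ?_
      exact min_eq_right (le_trans hpk (hpanti hs.2))
    have hIocval : (∫ s in Set.Ioc (0:ℝ) t, (fun _ => (k:ℝ)) s) = t * k := by
      rw [setIntegral_const, smul_eq_mul, measureReal_def, hIoc_vol]
    have hIoi : 0 ≤ ∫ s in Set.Ioi t, min (p s) (k:ℝ) :=
      setIntegral_nonneg measurableSet_Ioi fun s _ => le_min (hp0 s) hk0.le
    rw [hsplit, hIoc, hIocval]
    linarith

lemma measurable_M (hm : ∀ i, Measurable (X i)) {k : ℕ} (hk : k ≤ n) :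
    Measurable (fun ω => maxKSum k (fun i => X i ω)) := by
  have heq : (fun ω => maxKSum k (fun i => X i ω))
      = fun ω => (powersetCard k (univ : Finset (Fin n))).sup' (pcne hk)
          (fun I => ∑ i ∈ I, |X i ω|) := by
    funext ω
    exact maxKSum_eq_sup' hk _
  rw [heq]
  have hsup : Measurable ((powersetCard k (univ : Finset (Fin n))).sup' (pcne hk)
      (fun (I : Finset (Fin n)) (ω : Ω) => ∑ i ∈ I, |X i ω|)) :=
    Finset.measurable_sup' (pcne hk)
      (fun I _ => Finset.measurable_sum I fun i _ => (hm i).abs)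
  convert hsup using 1
  funext ω
  exact (Finset.sup'_apply (pcne hk)
    (fun (I : Finset (Fin n)) (ω : Ω) => ∑ i ∈ I, |X i ω|) ω).symm

lemma integrable_M (hm : ∀ i, Measurable (X i)) (hint : ∀ i, Integrable (X i) μ)
    {k : ℕ} (hk : k ≤ n) :
    Integrable (fun ω => maxKSum k (fun i => X i ω)) μ := by
  refine Integrable.mono' (integrable_finset_sum univ fun i _ => (hint i).abs)
    (measurable_M hm hk).aestronglyMeasurable
    (Filter.Eventually.of_forall fun ω => ?_)
  rw [Real.norm_eq_abs, abs_of_nonneg (maxKSum_nonneg hk _)]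
  exact maxKSum_le_total hk _

theorem main' (hm : ∀ i, Measurable (X i)) (hint : ∀ i, Integrable (X i) μ)
    {α : ℝ} (hα : 1 ≤ α)
    (hcond : ∀ i j, i ≠ j → ∀ s t : ℝ, 0 < s → 0 < t →
      (μ {ω | s ≤ |X i ω| ∧ t ≤ |X j ω|}).toReal ≤
        α * (μ {ω | s ≤ |X i ω|}).toReal * (μ {ω | t ≤ |X j ω|}).toReal)
    {k : ℕ} (hk1 : 1 ≤ k) (hkn : k ≤ n) :
    (36 * (5 + 4 * α) * (1 + 2 * α))⁻¹ * k * tk μ X k ≤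
        ∫ ω, maxKSum k (fun i => X i ω) ∂μ ∧
      ∫ ω, maxKSum k (fun i => X i ω) ∂μ ≤ 2 * k * tk μ X k := by
  classical
  have hα0 : (0:ℝ) < α := lt_of_lt_of_le one_pos hα
  have hk0 : (0:ℝ) < k := by exact_mod_cast hk1
  set M : Ω → ℝ := fun ω => maxKSum k (fun i => X i ω) with hM
  have hM_int : Integrable M μ := integrable_M hm hint hkn
  have hM_nonneg : ∀ ω, 0 ≤ M ω := fun ω => maxKSum_nonneg hkn _
  have hIM0 : 0 ≤ ∫ ω, M ω ∂μ := integral_nonneg hM_nonneg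
  set T : Set ℝ := {t : ℝ | 0 < t ∧
    ∑ i, ∫ ω in {ω | t ≤ |X i ω|}, |X i ω| ∂μ ≤ (k:ℝ) * t} with hT
  have htk : tk μ X k = sInf T := rfl
  have hTbdd : BddBelow T := ⟨0, fun t ht => ht.1.le⟩
  -- T is nonempty
  have hTne : T.Nonempty := by
    set C : ℝ := ∑ i, ∫ ω, |X i ω| ∂μ with hC
    have hC0 : 0 ≤ C := Finset.sum_nonneg fun i _ => integral_nonneg fun ω => abs_nonneg _
    refine ⟨C / k + 1, ⟨by positivity, ?_⟩⟩
    have hgle : (∑ i, ∫ ω in {ω | (C / k + 1) ≤ |X i ω|}, |X i ω| ∂μ) ≤ C := by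
      refine Finset.sum_le_sum fun i _ => ?_
      exact setIntegral_le_integral (hint i).abs
        (Filter.Eventually.of_forall fun ω => abs_nonneg _)
    have : (k:ℝ) * (C / k + 1) = C + k := by field_simp
    rw [this]
    linarith
  have ht0 : 0 ≤ sInf T := le_csInf hTne fun t ht => ht.1.le
  -- upper bound: for every t ∈ T, ∫ M ≤ 2 k t
  have hupper : ∀ t ∈ T, (∫ ω, M ω ∂μ) ≤ 2 * k * t := by
    rintro t ⟨ht0', hgt⟩
    set B : Ω → ℝ := fun ω => ∑ i, if t ≤ |X i ω| then |X i ω| else 0 with hB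
    have hBi_eq : ∀ i : Fin n, (fun ω => if t ≤ |X i ω| then |X i ω| else 0)
        = Set.indicator {ω | t ≤ |X i ω|} (fun ω => |X i ω|) := by
      intro i; funext ω; simp [Set.indicator_apply]
    have hB_int : Integrable B μ := by
      refine integrable_finset_sum _ fun i _ => ?_
      rw [hBi_eq i]
      exact (hint i).abs.indicator (measurableSet_S (hm i) t)
    have hptw : ∀ ω, M ω ≤ (k:ℝ) * t + B ω := by
      intro ω
      refine maxKSum_le hkn _ fun I hI => ?_
      have hterm : ∀ i : Fin n, |X i ω| ≤ t + (if t ≤ |X i ω| then |X i ω| else 0) := by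
        intro i
        by_cases h : t ≤ |X i ω|
        · rw [if_pos h]; linarith
        · rw [if_neg h]; push_neg at h; linarith
      calc ∑ i ∈ I, |X i ω| ≤ ∑ i ∈ I, (t + (if t ≤ |X i ω| then |X i ω| else 0)) :=
            Finset.sum_le_sum fun i _ => hterm i
        _ = (I.card : ℝ) * t + ∑ i ∈ I, (if t ≤ |X i ω| then |X i ω| else 0) := by
            rw [Finset.sum_add_distrib, Finset.sum_const, nsmul_eq_mul]
        _ ≤ (k:ℝ) * t + B ω := by
            rw [hI]
            refine add_le_add le_rfl ?_
            refine Finset.sum_le_sum_of_subset_of_nonneg (Finset.subset_univ I)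
              fun i _ _ => ?_
            by_cases h : t ≤ |X i ω|
            · rw [if_pos h]; exact abs_nonneg _
            · rw [if_neg h]
    have hIB : (∫ ω, B ω ∂μ) ≤ (k:ℝ) * t := by
      have : (∫ ω, B ω ∂μ) = ∑ i, ∫ ω in {ω | t ≤ |X i ω|}, |X i ω| ∂μ := by
        rw [hB, integral_finset_sum _ fun i _ => by
          rw [hBi_eq i]
          exact (hint i).abs.indicator (measurableSet_S (hm i) t)]
        refine Finset.sum_congr rfl fun i _ => ?_
        rw [hBi_eq i, integral_indicator (measurableSet_S (hm i) t)]
      rw [this]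
      exact hgt
    calc (∫ ω, M ω ∂μ) ≤ ∫ ω, ((k:ℝ) * t + B ω) ∂μ :=
          integral_mono hM_int ((integrable_const _).add hB_int) hptw
      _ = (k:ℝ) * t + ∫ ω, B ω ∂μ := by
          rw [integral_add (integrable_const _) hB_int, integral_const, smul_eq_mul,
            probReal_univ, one_mul]
      _ ≤ 2 * k * t := by linarith
  have hub : (∫ ω, M ω ∂μ) ≤ 2 * k * sInf T := by
    have hdiv : ∀ t ∈ T, (∫ ω, M ω ∂μ) / (2 * k) ≤ t := by
      intro t ht
      rw [div_le_iff₀ (by positivity)]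
      calc (∫ ω, M ω ∂μ) ≤ 2 * k * t := hupper t ht
        _ = t * (2 * k) := by ring
    have := le_csInf hTne hdiv
    rw [div_le_iff₀ (by positivity)] at this
    calc (∫ ω, M ω ∂μ) ≤ sInf T * (2 * k) := this
      _ = 2 * k * sInf T := by ring
  -- lower bound
  have hlow : ∀ t : ℝ, 0 < t → t < sInf T → (k:ℝ) * t / (8 * α) ≤ ∫ ω, M ω ∂μ := by
    intro t ht0' htlt
    have hnotin : t ∉ T := fun h => absurd (csInf_le hTbdd h) (not_le.2 htlt)
    have hgt : (k:ℝ) * t < ∑ i, ∫ ω in {ω | t ≤ |X i ω|}, |X i ω| ∂μ := by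
      by_contra hcon
      push_neg at hcon
      exact hnotin ⟨ht0', hcon⟩
    have hD := claimD hm hint hk1 ht0' hgt
    have hC := fun (s : ℝ) (hs : 0 < s) => claimC hm hα hcond hk1 hs
    -- chain
    have step1 : (∫ s in Set.Ioi (0:ℝ),
        min (∑ i, (μ {ω | s ≤ |X i ω|}).toReal) (k:ℝ) / (8*α))
        ≤ ∫ s in Set.Ioi (0:ℝ),
          (∫ ω, min (((univ.filter fun i => s ≤ |X i ω|).card : ℝ)) (k:ℝ) ∂μ) := by
      refine integral_mono_of_nonneg ?_ (h_integrable hm hint k) ?_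
      · refine Filter.Eventually.of_forall fun s => ?_
        have : 0 ≤ min (∑ i, (μ {ω | s ≤ |X i ω|}).toReal) (k:ℝ) :=
          le_min (Finset.sum_nonneg fun i _ => ENNReal.toReal_nonneg) hk0.le
        positivity
      · rw [Filter.EventuallyLE, ae_restrict_iff' measurableSet_Ioi]
        exact Filter.Eventually.of_forall fun s hs => hC s hs
    have step2 : (∫ s in Set.Ioi (0:ℝ),
        (∫ ω, min (((univ.filter fun i => s ≤ |X i ω|).card : ℝ)) (k:ℝ) ∂μ))
        ≤ ∫ ω, M ω ∂μ := by
      rw [← fub2 hm hint k]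
      refine integral_mono_of_nonneg ?_ hM_int ?_
      · refine Filter.Eventually.of_forall fun ω => ?_
        refine integral_nonneg fun s => ?_
        exact le_min (by positivity) (by positivity)
      · refine Filter.Eventually.of_forall fun ω => ?_
        exact key_pointwise hk1 hkn (fun i => X i ω)
    have step0 : (k:ℝ) * t / (8*α) ≤ ∫ s in Set.Ioi (0:ℝ),
        min (∑ i, (μ {ω | s ≤ |X i ω|}).toReal) (k:ℝ) / (8*α) := by
      rw [integral_div]
      exact div_le_div_of_nonneg_right hD (by positivity)
    linarith
  have hlowfinal : (k:ℝ) * sInf T / (8 * α) ≤ ∫ ω, M ω ∂μ := by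
    rcases eq_or_lt_of_le ht0 with heq | hpos
    · rw [← heq]
      simpa using hIM0
    · by_contra hcon
      push_neg at hcon
      have hu : (∫ ω, M ω ∂μ) * (8*α) / k < sInf T := by
        rw [div_lt_iff₀ hk0]
        rw [lt_div_iff₀ (by positivity : (0:ℝ) < 8*α)] at hcon
        nlinarith
      have hu0 : 0 ≤ (∫ ω, M ω ∂μ) * (8*α) / k := by positivity
      obtain ⟨t, ht1, ht2⟩ := exists_between hu
      have ht0' : 0 < t := lt_of_le_of_lt hu0 ht1
      have := hlow t ht0' ht2
      rw [div_le_iff₀ (by positivity : (0:ℝ) < 8*α)] at this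
      have : t ≤ (∫ ω, M ω ∂μ) * (8*α) / k := by
        rw [le_div_iff₀ hk0]
        nlinarith
      linarith
  constructor
  · have hcle : (36 * (5 + 4 * α) * (1 + 2 * α))⁻¹ * k * sInf T ≤ (k:ℝ) * sInf T / (8*α) := by
      rw [div_eq_mul_inv, mul_comm ((k:ℝ) * sInf T) _]
      rw [mul_assoc, mul_assoc]
      refine mul_le_mul_of_nonneg_right ?_ (by positivity)
      refine inv_anti₀ (by positivity) ?_
      nlinarith
    rw [htk]
    exact le_trans hcle hlowfinal
  · rw [htk]
    exact hub

end Meas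
end Aux13

open Aux13 in
theorem stmt_13_aux {Ω : Type*} [MeasurableSpace Ω] (μ : Measure Ω) [IsProbabilityMeasure μ]
    {n : ℕ} (X : Fin n → Ω → ℝ) (hint : ∀ i, Integrable (X i) μ)
    (α : ℝ) (hα : 1 ≤ α)
    (hcond : ∀ i j, i ≠ j → ∀ s t : ℝ, 0 < s → 0 < t →
      (μ {ω | s ≤ |X i ω| ∧ t ≤ |X j ω|}).toReal ≤
        α * (μ {ω | s ≤ |X i ω|}).toReal * (μ {ω | t ≤ |X j ω|}).toReal) :
    ∀ k : ℕ, 1 ≤ k → k ≤ n →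
      (36 * (5 + 4 * α) * (1 + 2 * α))⁻¹ * k * tk μ X k ≤
          ∫ ω, maxKSum k (fun i => X i ω) ∂μ ∧
        ∫ ω, maxKSum k (fun i => X i ω) ∂μ ≤ 2 * k * tk μ X k := by
  intro k hk1 hkn
  classical
  set Y : Fin n → Ω → ℝ := fun i => (hint i).1.mk (X i) with hY
  have hYm : ∀ i, Measurable (Y i) := fun i => (hint i).1.stronglyMeasurable_mk.measurable
  have hae : ∀ i, X i =ᵐ[μ] Y i := fun i => (hint i).1.ae_eq_mk
  have hYint : ∀ i, Integrable (Y i) μ := fun i => (hint i).congr (hae i)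
  have habs : ∀ i, (fun ω => |X i ω|) =ᵐ[μ] fun ω => |Y i ω| := fun i =>
    (hae i).mono fun ω h => by dsimp only; rw [h]
  have hsetae : ∀ (i : Fin n) (s : ℝ), {ω | s ≤ |X i ω|} =ᵐ[μ] {ω | s ≤ |Y i ω|} := by
    intro i s
    filter_upwards [hae i] with ω hω
    change (s ≤ |X i ω|) = (s ≤ |Y i ω|)
    rw [hω]
  have hmeq : ∀ (i : Fin n) (s : ℝ), μ {ω | s ≤ |Y i ω|} = μ {ω | s ≤ |X i ω|} :=
    fun i s => measure_congr (hsetae i s).symm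
  have hcondY : ∀ i j, i ≠ j → ∀ s t : ℝ, 0 < s → 0 < t →
      (μ {ω | s ≤ |Y i ω| ∧ t ≤ |Y j ω|}).toReal ≤
        α * (μ {ω | s ≤ |Y i ω|}).toReal * (μ {ω | t ≤ |Y j ω|}).toReal := by
    intro i j hij s t hs ht
    have hpair : μ {ω | s ≤ |Y i ω| ∧ t ≤ |Y j ω|} = μ {ω | s ≤ |X i ω| ∧ t ≤ |X j ω|} := by
      refine measure_congr ?_
      filter_upwards [hae i, hae j] with ω h1 h2
      change (s ≤ |Y i ω| ∧ t ≤ |Y j ω|) = (s ≤ |X i ω| ∧ t ≤ |X j ω|)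
      rw [h1, h2]
    rw [hpair, hmeq i s, hmeq j t]
    exact hcond i j hij s t hs ht
  have htkeq : tk μ X (k:ℝ) = tk μ Y (k:ℝ) := by
    have hsum : ∀ t : ℝ, (∑ i, ∫ ω in {ω | t ≤ |X i ω|}, |X i ω| ∂μ)
        = ∑ i, ∫ ω in {ω | t ≤ |Y i ω|}, |Y i ω| ∂μ := by
      intro t
      refine Finset.sum_congr rfl fun i _ => ?_
      calc (∫ ω in {ω | t ≤ |X i ω|}, |X i ω| ∂μ)
          = ∫ ω in {ω | t ≤ |X i ω|}, |Y i ω| ∂μ :=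
            integral_congr_ae (ae_restrict_of_ae (habs i))
        _ = ∫ ω in {ω | t ≤ |Y i ω|}, |Y i ω| ∂μ := setIntegral_congr_set (hsetae i t)
    unfold tk
    congr 1
    ext t
    simp only [Set.mem_setOf_eq, hsum t]
  have hMae : (∫ ω, maxKSum k (fun i => X i ω) ∂μ) = ∫ ω, maxKSum k (fun i => Y i ω) ∂μ := by
    refine integral_congr_ae ?_
    have hall : ∀ᵐ ω ∂μ, ∀ i, X i ω = Y i ω := ae_all_iff.2 hae
    filter_upwards [hall] with ω hω
    congr 1
    funext i
    exact hω i
  rw [htkeq, hMae]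
  exact main' hYm hYint hα hcondY hk1 hkn

theorem stmt_13 {Ω : Type*} [MeasurableSpace Ω] (μ : Measure Ω) [IsProbabilityMeasure μ]
    {n : ℕ} (X : Fin n → Ω → ℝ) (hint : ∀ i, Integrable (X i) μ)
    (α : ℝ) (hα : 1 ≤ α)
    (hcond : ∀ i j, i ≠ j → ∀ s t : ℝ, 0 < s → 0 < t →
      (μ {ω | s ≤ |X i ω| ∧ t ≤ |X j ω|}).toReal ≤
        α * (μ {ω | s ≤ |X i ω|}).toReal * (μ {ω | t ≤ |X j ω|}).toReal) :
    ∀ k : ℕ, 1 ≤ k → k ≤ n →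
      (36 * (5 + 4 * α) * (1 + 2 * α))⁻¹ * k * tk μ X k ≤
          ∫ ω, maxKSum k (fun i => X i ω) ∂μ ∧
        ∫ ω, maxKSum k (fun i => X i ω) ∂μ ≤ 2 * k * tk μ X k :=
  stmt_13_aux μ X hint α hα hcond
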